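/- Fix H > 0 and define c_H(a,b) := ∫₀^{min(a,b)} (a−u)^{H−1/2} (b−u)^{H−1/2} du for a, b > 0. Then for all integers 1 ≤ i < j, as τ ↘ 0 one has c_H(τ^i, τ^j) ∼ τ^{(i+j)H + (j−i)/2} / (H + 1/2), and for every integer k ≥ 1 one has the exact identity c_H(τ^k, τ^k) = τ^{2kH}/(2H). -/

import Mathlib

open MeasureTheory Set Filter intervalIntegral

/-- Covariance function of the Riemann–Liouville process
`Y_t = ∫₀ᵗ (t−s)^{H−1/2} dB_s`. -/
noncomputable def cH (H a b : ℝ) : ℝ :=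
  ∫ u in (0:ℝ)..(min a b), (a - u) ^ (H - 1/2) * (b - u) ^ (H - 1/2)

private lemma integral_sub_rpow {a q : ℝ} (ha : 0 ≤ a) (hq : -1 < q) :
    ∫ u in (0:ℝ)..a, (a - u) ^ q = a ^ (q + 1) / (q + 1) := by
  have h := intervalIntegral.integral_comp_sub_left (a := 0) (b := a) (fun x => x ^ q) a
  simp only [sub_zero, sub_self] at h
  rw [h, integral_rpow (Or.inl hq), Real.zero_rpow (by linarith), sub_zero]

private lemma integrable_sub_rpow (a : ℝ) {q : ℝ} (hq : -1 < q) :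
    IntervalIntegrable (fun u => (a - u) ^ q) volume 0 a := by
  have h := (intervalIntegral.intervalIntegrable_rpow' (a := 0) (b := a) hq).comp_sub_left a
  simpa using h.symm

private lemma rpow_between {x y z : ℝ} (p : ℝ) (hx : 0 < x) (hxy : x ≤ y) (hyz : y ≤ z) :
    min (x ^ p) (z ^ p) ≤ y ^ p ∧ y ^ p ≤ max (x ^ p) (z ^ p) := by
  rcases le_or_gt 0 p with hp | hp
  · exact ⟨le_trans (min_le_left _ _) (Real.rpow_le_rpow hx.le hxy hp),
      le_trans (Real.rpow_le_rpow (hx.le.trans hxy) hyz hp) (le_max_right _ _)⟩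
  · exact ⟨le_trans (min_le_right _ _) (Real.rpow_le_rpow_of_nonpos (hx.trans_le hxy) hyz hp.le),
      le_trans (Real.rpow_le_rpow_of_nonpos hx hxy hp.le) (le_max_left _ _)⟩

private lemma cH_diag {H a : ℝ} (hH : 0 < H) (ha : 0 < a) :
    cH H a a = a ^ (2 * H) / (2 * H) := by
  unfold cH
  rw [min_self]
  have hcong : ∀ u ∈ uIcc (0:ℝ) a,
      (a - u) ^ (H - 1/2) * (a - u) ^ (H - 1/2) = (a - u) ^ (2 * H - 1) := by
    intro u hu
    rw [uIcc_of_le ha.le] at hu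
    have h0 : 0 ≤ a - u := by linarith [hu.2]
    rcases eq_or_ne H (1/2) with h | h
    · norm_num [h]
    · rw [← Real.rpow_add' h0 (by intro hc; apply h; linarith)]
      congr 1; ring
  rw [intervalIntegral.integral_congr hcong, integral_sub_rpow ha.le (by linarith)]
  have : 2 * H - 1 + 1 = 2 * H := by ring
  rw [this]

/-- Asymptotics of the covariances `θ_{ij}(τ) = c_H(τ^i, τ^j)` at the time
points `τ^i` as `τ ↘ 0`: for `1 ≤ i < j`,
`c_H(τ^i, τ^j) ∼ τ^{(i+j)H + (j−i)/2}/(H+1/2)`, and on the diagonal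
`c_H(τ^k, τ^k) = τ^{2kH}/(2H)` exactly. -/
theorem stmt_10 (H : ℝ) (hH : 0 < H) :
    (∀ i j : ℕ, 1 ≤ i → i < j →
      Filter.Tendsto (fun τ : ℝ => cH H (τ ^ i) (τ ^ j) /
          (τ ^ (((i : ℝ) + (j : ℝ)) * H + ((j : ℝ) - (i : ℝ)) / 2) / (H + 1/2)))
        (nhdsWithin 0 (Set.Ioi 0)) (nhds 1)) ∧
    (∀ k : ℕ, 1 ≤ k → ∀ τ : ℝ, 0 < τ →
      cH H (τ ^ k) (τ ^ k) = τ ^ (2 * (k : ℝ) * H) / (2 * H)) := by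
  have hp : (-1:ℝ) < H - 1/2 := by linarith
  have hp1 : (0:ℝ) < H - 1/2 + 1 := by linarith
  constructor
  · intro i j hi hij
    set p : ℝ := H - 1/2 with hpdef
    set E : ℝ := ((i : ℝ) + (j : ℝ)) * H + ((j : ℝ) - (i : ℝ)) / 2 with hEdef
    -- key two-sided bound on (0,1)
    have key : ∀ τ : ℝ, τ ∈ Ioo (0:ℝ) 1 →
        min ((1 - τ ^ (j - i)) ^ p) 1 ≤ cH H (τ ^ i) (τ ^ j) / (τ ^ E / (H + 1/2)) ∧
        cH H (τ ^ i) (τ ^ j) / (τ ^ E / (H + 1/2)) ≤ max ((1 - τ ^ (j - i)) ^ p) 1 := by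
      intro τ ⟨hτ0, hτ1⟩
      set a : ℝ := τ ^ i with hadef
      set b : ℝ := τ ^ j with hbdef
      have ha : 0 < a := pow_pos hτ0 i
      have hb : 0 < b := pow_pos hτ0 j
      have hba : b < a := pow_lt_pow_right_of_lt_one₀ hτ0 hτ1 hij
      have hab : 0 < a - b := by linarith
      -- integrability
      have hI1 : IntervalIntegrable (fun u => (b - u) ^ p) volume 0 b :=
        integrable_sub_rpow b hp
      have hcont : ContinuousOn (fun u : ℝ => (a - u) ^ p) (uIcc 0 b) := by
        apply ContinuousOn.rpow_const ((continuous_const.sub continuous_id).continuousOn)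
        intro u hu
        rw [uIcc_of_le hb.le] at hu
        exact Or.inl (sub_ne_zero.mpr (lt_of_le_of_lt hu.2 hba).ne')
      have hIg : IntervalIntegrable (fun u => (a - u) ^ p * (b - u) ^ p) volume 0 b :=
        hI1.continuousOn_mul hcont
      -- pointwise bounds
      set m : ℝ := min ((a - b) ^ p) (a ^ p) with hmdef
      set M : ℝ := max ((a - b) ^ p) (a ^ p) with hMdef
      have hpt : ∀ u ∈ Icc (0:ℝ) b,
          m * (b - u) ^ p ≤ (a - u) ^ p * (b - u) ^ p ∧
          (a - u) ^ p * (b - u) ^ p ≤ M * (b - u) ^ p := by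
        intro u hu
        have hnn : 0 ≤ (b - u) ^ p := Real.rpow_nonneg (by linarith [hu.2]) p
        have hbd := rpow_between p hab (by linarith [hu.2] : a - b ≤ a - u)
          (by linarith [hu.1] : a - u ≤ a)
        exact ⟨mul_le_mul_of_nonneg_right hbd.1 hnn, mul_le_mul_of_nonneg_right hbd.2 hnn⟩
      -- integral bounds
      have hval : ∫ u in (0:ℝ)..b, (b - u) ^ p = b ^ (p + 1) / (p + 1) :=
        integral_sub_rpow hb.le hp
      have hcHeq : cH H a b = ∫ u in (0:ℝ)..b, (a - u) ^ p * (b - u) ^ p := by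
        unfold cH
        rw [min_eq_right hba.le]
      have hlow : m * (b ^ (p + 1) / (p + 1)) ≤ cH H a b := by
        rw [hcHeq, ← hval, ← intervalIntegral.integral_const_mul]
        exact intervalIntegral.integral_mono_on hb.le (hI1.const_mul m) hIg
          (fun u hu => (hpt u hu).1)
      have hup : cH H a b ≤ M * (b ^ (p + 1) / (p + 1)) := by
        rw [hcHeq, ← hval, ← intervalIntegral.integral_const_mul]
        exact intervalIntegral.integral_mono_on hb.le hIg (hI1.const_mul M)
          (fun u hu => (hpt u hu).2)
      -- denominator identity
      have hX : (0:ℝ) < b ^ (p + 1) / (p + 1) := by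
        have := Real.rpow_pos_of_pos hb (p + 1)
        positivity
      have hap : (0:ℝ) < a ^ p := Real.rpow_pos_of_pos ha p
      have hD : τ ^ E / (H + 1/2) = a ^ p * (b ^ (p + 1) / (p + 1)) := by
        have h1 : a ^ p = τ ^ ((i : ℝ) * p) := by
          rw [hadef, ← Real.rpow_natCast τ i, ← Real.rpow_mul hτ0.le]
        have h2 : b ^ (p + 1) = τ ^ ((j : ℝ) * (p + 1)) := by
          rw [hbdef, ← Real.rpow_natCast τ j, ← Real.rpow_mul hτ0.le]
        have h3 : τ ^ E = τ ^ ((i : ℝ) * p) * τ ^ ((j : ℝ) * (p + 1)) := by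
          rw [← Real.rpow_add hτ0]
          congr 1
          rw [hEdef, hpdef]; ring
        have h4 : H + 1/2 = p + 1 := by rw [hpdef]; ring
        rw [h3, h4, h1, h2]
        field_simp
      have hDpos : (0:ℝ) < τ ^ E / (H + 1/2) := by rw [hD]; positivity
      -- the quotient bounds
      have heqm : m / a ^ p = m * (b ^ (p + 1) / (p + 1)) / (τ ^ E / (H + 1/2)) := by
        rw [hD, mul_div_mul_right _ _ hX.ne']
      have heqM : M / a ^ p = M * (b ^ (p + 1) / (p + 1)) / (τ ^ E / (H + 1/2)) := by
        rw [hD, mul_div_mul_right _ _ hX.ne']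
      have hQlow : m / a ^ p ≤ cH H a b / (τ ^ E / (H + 1/2)) := by
        rw [heqm]; gcongr
      have hQup : cH H a b / (τ ^ E / (H + 1/2)) ≤ M / a ^ p := by
        rw [heqM]; gcongr
      -- rewrite the bounds
      have hfrac : (a - b) / a = 1 - τ ^ (j - i) := by
        have hba' : τ ^ (j - i) = b / a := by
          rw [hadef, hbdef, pow_sub₀ τ hτ0.ne' hij.le]
          exact (div_eq_mul_inv _ _).symm
        rw [hba', eq_sub_iff_add_eq, ← add_div, sub_add_cancel, div_self ha.ne']
      have hmin : m / a ^ p = min ((1 - τ ^ (j - i)) ^ p) 1 := by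
        rw [hmdef, ← min_div_div_right hap.le, div_self hap.ne',
          ← Real.div_rpow hab.le ha.le, hfrac]
      have hmax : M / a ^ p = max ((1 - τ ^ (j - i)) ^ p) 1 := by
        rw [hMdef, ← max_div_div_right hap.le, div_self hap.ne',
          ← Real.div_rpow hab.le ha.le, hfrac]
      exact ⟨hmin ▸ hQlow, hmax ▸ hQup⟩
    -- squeeze
    have hIoo : Ioo (0:ℝ) 1 ∈ nhdsWithin (0:ℝ) (Set.Ioi 0) := Ioo_mem_nhdsGT zero_lt_one
    have hbase : Tendsto (fun τ : ℝ => 1 - τ ^ (j - i)) (nhdsWithin 0 (Set.Ioi 0)) (nhds 1) := by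
      have h1 : Tendsto (fun τ : ℝ => 1 - τ ^ (j - i)) (nhds 0) (nhds (1 - (0:ℝ) ^ (j - i))) :=
        (continuous_const.sub (continuous_pow _)).tendsto 0
      rw [zero_pow (Nat.sub_ne_zero_of_lt hij), sub_zero] at h1
      exact h1.mono_left nhdsWithin_le_nhds
    have hrp : Tendsto (fun t : ℝ => t ^ p) (nhds 1) (nhds 1) := by
      have h2 := (Real.continuousAt_rpow_const 1 p (Or.inl one_ne_zero)).tendsto
      rwa [Real.one_rpow] at h2
    have hL : Tendsto (fun τ : ℝ => min ((1 - τ ^ (j - i)) ^ p) 1)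
        (nhdsWithin 0 (Set.Ioi 0)) (nhds 1) := by
      simpa using (hrp.comp hbase).min (tendsto_const_nhds (x := (1:ℝ)))
    have hU : Tendsto (fun τ : ℝ => max ((1 - τ ^ (j - i)) ^ p) 1)
        (nhdsWithin 0 (Set.Ioi 0)) (nhds 1) := by
      simpa using (hrp.comp hbase).max (tendsto_const_nhds (x := (1:ℝ)))
    exact tendsto_of_tendsto_of_tendsto_of_le_of_le' hL hU
      (eventually_of_mem hIoo fun τ hτ => (key τ hτ).1)
      (eventually_of_mem hIoo fun τ hτ => (key τ hτ).2)
  · intro k hk τ hτ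
    have hτk : 0 < τ ^ k := pow_pos hτ k
    rw [cH_diag hH hτk, ← Real.rpow_natCast τ k, ← Real.rpow_mul hτ.le]
    have : (k : ℝ) * (2 * H) = 2 * (k : ℝ) * H := by ring
    rw [this]
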